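/- Let Z ⊆ B(H₀) be a JC*-triple spanned by a linearly independent rectangular grid of rank 1 consisting of n tripotents u₁, …, u_n, and let (T, ρ) be a universal enveloping TRO of Z. Then the complex dimension of T is at most ∑_{k=1}^{n} C(n, k−1)·C(n, k), where C(n,k) denotes the binomial coefficient. -/

import Mathlib

noncomputable section

open Matrix

/-- A bundled complex Hilbert space. -/
structure HilbertC : Type 1 where
  carrier : Type
  [nacg : NormedAddCommGroup carrier]
  [ips : InnerProductSpace ℂ carrier]
  [cs : CompleteSpace carrier]

attribute [instance] HilbertC.nacg HilbertC.ips HilbertC.cs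

/-- The algebra `B(H)` of bounded operators on a complex Hilbert space `H`. -/
abbrev BH (H : HilbertC) := H.carrier →L[ℂ] H.carrier

/-- The Jordan triple product `{x,y,z} = (1/2)(x y* z + z y* x)`. -/
def jtp {A : Type*} [NonUnitalRing A] [StarRing A] [Module ℂ A] (x y z : A) : A :=
  (2⁻¹ : ℂ) • (x * star y * z + z * star y * x)

/-- `Z` is a JC*-triple: a closed complex subspace of `B(H)` closed under the
Jordan triple product. -/
def IsJCTriple {H : HilbertC} (Z : Submodule ℂ (BH H)) : Prop :=
  IsClosed (Z : Set (BH H)) ∧ ∀ x ∈ Z, ∀ y ∈ Z, ∀ z ∈ Z, jtp x y z ∈ Z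

/-- `T` is a TRO: a closed complex subspace of `B(H)` with `x y* z ∈ T`. -/
def IsTROsub {H : HilbertC} (T : Submodule ℂ (BH H)) : Prop :=
  IsClosed (T : Set (BH H)) ∧ ∀ x ∈ T, ∀ y ∈ T, ∀ z ∈ T, x * star y * z ∈ T

/-- The smallest closed complex subspace of `B(H)` containing `S` and closed under
the ternary product `(x,y,z) ↦ x y* z`. -/
def troClosure {H : HilbertC} (S : Set (BH H)) : Submodule ℂ (BH H) :=
  sInf {W : Submodule ℂ (BH H) | IsClosed (W : Set (BH H)) ∧ S ⊆ W ∧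
    ∀ x ∈ W, ∀ y ∈ W, ∀ z ∈ W, x * star y * z ∈ W}

/-- A triple homomorphism from a subspace `Z ⊆ B(H)` into `B(K)`. -/
def IsTripleHomB {H K : HilbertC} (Z : Submodule ℂ (BH H)) (φ : ↥Z →L[ℂ] BH K) : Prop :=
  ∀ x y z w : ↥Z, (w : BH H) = jtp (x : BH H) (y : BH H) (z : BH H) →
    φ w = jtp (φ x) (φ y) (φ z)

/-- A triple homomorphism from a subspace `Z ⊆ B(H)` into a subspace `U ⊆ B(K)`. -/
def IsTripleHomInto {H K : HilbertC} (Z : Submodule ℂ (BH H)) (U : Submodule ℂ (BH K))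
    (α : ↥Z →L[ℂ] ↥U) : Prop :=
  ∀ x y z w : ↥Z, (w : BH H) = jtp (x : BH H) (y : BH H) (z : BH H) →
    ((α w : BH K)) = jtp ((α x : BH K)) ((α y : BH K)) ((α z : BH K))

/-- A TRO-homomorphism between subspaces of operator algebras. -/
def IsTROHom {H K : HilbertC} (T : Submodule ℂ (BH H)) (U : Submodule ℂ (BH K))
    (β : ↥T →L[ℂ] ↥U) : Prop :=
  ∀ x y z w : ↥T, (w : BH H) = (x : BH H) * star (y : BH H) * (z : BH H) →
    ((β w : BH K)) = (β x : BH K) * star ((β y : BH K)) * ((β z : BH K))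

/-- `(T, ρ)` is a universal enveloping TRO of `Z`. -/
def IsUnivTRO {H Hh : HilbertC} (Z : Submodule ℂ (BH H)) (T : Submodule ℂ (BH Hh))
    (ρ : ↥Z →L[ℂ] ↥T) : Prop :=
  IsTROsub T ∧ IsTripleHomInto Z T ρ ∧
  troClosure (Set.range fun z : ↥Z => (ρ z : BH Hh)) = T ∧
  ∀ (K : HilbertC) (U : Submodule ℂ (BH K)), IsTROsub U →
    ∀ α : ↥Z →L[ℂ] ↥U, IsTripleHomInto Z U α →
      ∃ β : ↥T →L[ℂ] ↥U, IsTROHom T U β ∧ ∀ z, β (ρ z) = α z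

/-- The multiplication table of a rectangular grid of rank 1 (axioms (RG'1)-(RG'3)):
`{u_i,u_i,u_i} = u_i`, `{u_i,u_i,u_k} = (1/2) u_k` for `i ≠ k` (and its outer-symmetric
version), and all other triple products of grid elements are `0`. -/
def rgVal {A : Type*} [AddCommGroup A] [Module ℂ A] {n : ℕ}
    (u : Fin n → A) (i j k : Fin n) : A :=
  if i = j then (if j = k then u k else (2⁻¹ : ℂ) • u k)
  else if j = k then (2⁻¹ : ℂ) • u i
  else 0

/-- `Z` is linearly spanned by the linearly independent rank-1 rectangular grid
`u₁, …, u_n`. -/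
def IsRank1Grid {H : HilbertC} {n : ℕ} (Z : Submodule ℂ (BH H)) (u : Fin n → BH H) : Prop :=
  LinearIndependent ℂ u ∧ Z = Submodule.span ℂ (Set.range u) ∧
  ∀ i j k, jtp (u i) (u j) (u k) = rgVal u i j k


noncomputable section

namespace Stmt17

set_option linter.unusedSectionVars false

variable {B : Type*} [Ring B] [StarRing B] [Algebra ℂ B] {n : ℕ}

def wletter (v : Fin n → B) (b : Bool) (a : Fin n) : B := if b then star (v a) else v a

def wgo (v : Fin n → B) : Bool → List (Fin n) → B
  | _, [] => 1
  | b, a :: t => wletter v b a * wgo v (!b) t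

def lpar (l : List (Fin n)) : Bool := Nat.bodd l.length

@[simp] lemma lpar_nil : lpar ([] : List (Fin n)) = false := by simp [lpar]
@[simp] lemma lpar_cons (a : Fin n) (t : List (Fin n)) : lpar (a :: t) = !lpar t := by
  simp [lpar, Nat.bodd_succ]
@[simp] lemma lpar_reverse (l : List (Fin n)) : lpar l.reverse = lpar l := by simp [lpar]

lemma wgo_append (v : Fin n → B) (b : Bool) (x y : List (Fin n)) :
    wgo v b (x ++ y) = wgo v b x * wgo v (xor (lpar x) b) y := by
  induction x generalizing b with
  | nil => simp [wgo]
  | cons a t ih =>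
      rw [List.cons_append]
      show wletter v b a * wgo v (!b) (t ++ y) = wletter v b a * wgo v (!b) t * _
      rw [ih, mul_assoc, lpar_cons]
      have : ∀ p b : Bool, (p ^^ !b) = ((!p) ^^ b) := by decide
      rw [this]

@[simp] lemma star_wletter (v : Fin n → B) (b : Bool) (a : Fin n) :
    star (wletter v b a) = wletter v (!b) a := by
  cases b <;> simp [wletter]

lemma star_wgo (v : Fin n → B) (b : Bool) (l : List (Fin n)) :
    star (wgo v b l) = wgo v ((!lpar l) ^^ (!b)) l.reverse := by
  induction l generalizing b with
  | nil => simp [wgo]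
  | cons a t ih =>
      show star (wletter v b a * wgo v (!b) t) = _
      rw [StarMul.star_mul, ih, List.reverse_cons, wgo_append, lpar_reverse, lpar_cons,
        star_wletter]
      have h1 : ((!lpar t) ^^ (!!b)) = ((!!lpar t) ^^ !b) := by
        generalize lpar t = p; cases p <;> cases b <;> rfl
      have h2 : (lpar t ^^ ((!!lpar t) ^^ !b)) = !b := by
        generalize lpar t = p; cases p <;> cases b <;> rfl
      rw [h1, h2]
      show _ = wgo v _ t.reverse * (wletter v (!b) a * 1)
      rw [mul_one]




variable {B : Type*} [Ring B] [StarRing B] [Algebra ℂ B] {n : ℕ}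

/-- The TRO relations satisfied by the images of a rank-1 rectangular grid. -/
structure RGrel (v : Fin n → B) : Prop where
  ra : ∀ i, v i * star (v i) * v i = v i
  rb : ∀ i j, i ≠ j → v i * star (v j) * v i = 0
  rc : ∀ i k, i ≠ k → v i * star (v i) * v k + v k * star (v i) * v i = v k
  rd : ∀ i j k, i ≠ j → j ≠ k → i ≠ k →
    v i * star (v j) * v k + v k * star (v j) * v i = 0

variable {v : Fin n → B}

lemma RGrel.ra' (hr : RGrel v) (i : Fin n) :
    star (v i) * (v i * star (v i)) = star (v i) := by
  have := congrArg star (hr.ra i)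
  simpa [StarMul.star_mul, mul_assoc] using this

lemma RGrel.rb' (hr : RGrel v) {i j : Fin n} (h : i ≠ j) :
    star (v i) * (v j * star (v i)) = 0 := by
  have := congrArg star (hr.rb i j h)
  simpa [StarMul.star_mul, mul_assoc] using this

lemma RGrel.rc' (hr : RGrel v) {i k : Fin n} (h : i ≠ k) :
    star (v i) * (v i * star (v k)) + star (v k) * (v i * star (v i)) = star (v k) := by
  have := congrArg star (hr.rc i k h)
  simpa [StarMul.star_mul, mul_assoc, add_comm] using this

lemma RGrel.rd' (hr : RGrel v) {i j k : Fin n} (h1 : i ≠ j) (h2 : j ≠ k) (h3 : i ≠ k) :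
    star (v i) * (v j * star (v k)) + star (v k) * (v j * star (v i)) = 0 := by
  have := congrArg star (hr.rd i j k h1 h2 h3)
  simpa [StarMul.star_mul, mul_assoc, add_comm] using this

lemma RGrel.L1 (hr : RGrel v) (b : Bool) (a : Fin n) :
    wgo v b [a, a, a] = wgo v b [a] := by
  cases b
  · show v a * (star (v a) * (v a * 1)) = v a * 1
    simp only [mul_one, ← mul_assoc]
    exact hr.ra a
  · show star (v a) * (v a * (star (v a) * 1)) = star (v a) * 1
    simp only [mul_one]
    exact hr.ra' a

lemma RGrel.L2 (hr : RGrel v) (b : Bool) {a c : Fin n} (h : a ≠ c) :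
    wgo v b [a, c, a] = 0 := by
  cases b
  · show v a * (star (v c) * (v a * 1)) = 0
    rw [mul_one, ← mul_assoc, hr.rb a c h]
  · show star (v a) * (v c * (star (v a) * 1)) = 0
    rw [mul_one, hr.rb' h]

lemma RGrel.L3 (hr : RGrel v) (b : Bool) {a d : Fin n} (h : a ≠ d) :
    wgo v b [a, a, d] = wgo v b [d] - wgo v b [d, a, a] := by
  cases b
  · show v a * (star (v a) * (v d * 1)) = v d * 1 - v d * (star (v a) * (v a * 1))
    have h3 := eq_sub_of_add_eq (hr.rc a d h)
    simpa [mul_assoc] using h3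
  · show star (v a) * (v a * (star (v d) * 1)) =
      star (v d) * 1 - star (v d) * (v a * (star (v a) * 1))
    have h3 := eq_sub_of_add_eq (hr.rc' h)
    simpa [mul_assoc] using h3

lemma RGrel.L4 (hr : RGrel v) (b : Bool) {a d : Fin n} (h : d ≠ a) :
    wgo v b [a, d, d] = wgo v b [a] - wgo v b [d, d, a] := by
  cases b
  · show v a * (star (v d) * (v d * 1)) = v a * 1 - v d * (star (v d) * (v a * 1))
    have h3 := eq_sub_of_add_eq' (hr.rc d a h)
    simpa [mul_assoc] using h3
  · show star (v a) * (v d * (star (v d) * 1)) =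
      star (v a) * 1 - star (v d) * (v d * (star (v a) * 1))
    have h3 := eq_sub_of_add_eq' (hr.rc' h)
    simpa [mul_assoc] using h3

lemma RGrel.L5 (hr : RGrel v) (b : Bool) {a c d : Fin n}
    (h1 : a ≠ c) (h2 : c ≠ d) (h3 : a ≠ d) :
    wgo v b [a, c, d] = - wgo v b [d, c, a] := by
  cases b
  · show v a * (star (v c) * (v d * 1)) = -(v d * (star (v c) * (v a * 1)))
    have h4 := eq_neg_of_add_eq_zero_left (hr.rd a c d h1 h2 h3)
    simpa [mul_assoc] using h4
  · show star (v a) * (v c * (star (v d) * 1)) = -(star (v d) * (v c * (star (v a) * 1)))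
    have h4 := eq_neg_of_add_eq_zero_left (hr.rd' h1 h2 h3)
    simpa [mul_assoc] using h4

/-! Splice lemmas -/

lemma splice_congr {m m' : List (Fin n)} (hp : lpar m = lpar m')
    (h : ∀ c, wgo v c m = wgo v c m') (b : Bool) (x z : List (Fin n)) :
    wgo v b (x ++ m ++ z) = wgo v b (x ++ m' ++ z) := by
  rw [List.append_assoc, List.append_assoc, wgo_append v b x, wgo_append v b x,
    wgo_append v _ m z, wgo_append v _ m' z, h, hp]

lemma splice_zero {m : List (Fin n)} (h : ∀ c, wgo v c m = 0) (b : Bool)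
    (x z : List (Fin n)) : wgo v b (x ++ m ++ z) = 0 := by
  rw [List.append_assoc, wgo_append v b x, wgo_append v _ m z, h, zero_mul, mul_zero]

lemma splice_sub {m m₁ m₂ : List (Fin n)} (hp1 : lpar m = lpar m₁) (hp2 : lpar m = lpar m₂)
    (h : ∀ c, wgo v c m = wgo v c m₁ - wgo v c m₂) (b : Bool) (x z : List (Fin n)) :
    wgo v b (x ++ m ++ z) = wgo v b (x ++ m₁ ++ z) - wgo v b (x ++ m₂ ++ z) := by
  have e1 : wgo v b (x ++ m₁ ++ z) =
      wgo v b x * (wgo v (lpar x ^^ b) m₁ * wgo v (lpar m ^^ (lpar x ^^ b)) z) := by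
    rw [List.append_assoc, wgo_append v b x, wgo_append v _ m₁ z, hp1]
  have e2 : wgo v b (x ++ m₂ ++ z) =
      wgo v b x * (wgo v (lpar x ^^ b) m₂ * wgo v (lpar m ^^ (lpar x ^^ b)) z) := by
    rw [List.append_assoc, wgo_append v b x, wgo_append v _ m₂ z, hp2]
  rw [e1, e2, List.append_assoc, wgo_append v b x, wgo_append v _ m z, h,
    sub_mul, mul_sub]

lemma splice_neg {m m' : List (Fin n)} (hp : lpar m = lpar m')
    (h : ∀ c, wgo v c m = - wgo v c m') (b : Bool) (x z : List (Fin n)) :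
    wgo v b (x ++ m ++ z) = - wgo v b (x ++ m' ++ z) := by
  rw [List.append_assoc, List.append_assoc, wgo_append v b x, wgo_append v b x,
    wgo_append v _ m z, wgo_append v _ m' z, h, hp, neg_mul, mul_neg]


/-! ### The base-`n` value of a word, used as termination measure -/

def nstep (n : ℕ) (acc : ℕ) (a : Fin n) : ℕ := acc * n + a.val

def nu : List (Fin n) → ℕ := List.foldl (nstep n) 0

lemma nu_go (l : List (Fin n)) (acc : ℕ) :
    List.foldl (nstep n) acc l = acc * n ^ l.length + nu l := by
  induction l generalizing acc with
  | nil => simp [nu]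
  | cons a t ih =>
      show List.foldl (nstep n) (nstep n acc a) t = _
      rw [ih]
      have : nu (a :: t) = nstep n 0 a * n ^ t.length + nu t := by
        show List.foldl (nstep n) (nstep n 0 a) t = _
        rw [ih]
      rw [this]
      simp only [nstep, List.length_cons]
      ring

lemma nu_cons (a : Fin n) (t : List (Fin n)) :
    nu (a :: t) = a.val * n ^ t.length + nu t := by
  show List.foldl (nstep n) (nstep n 0 a) t = _
  rw [nu_go]
  simp [nstep]

lemma nu_append (x m : List (Fin n)) :
    nu (x ++ m) = nu x * n ^ m.length + nu m := by
  show List.foldl (nstep n) 0 (x ++ m) = _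
  rw [List.foldl_append, nu_go]
  rfl

lemma nu_lt (l : List (Fin n)) : nu l < n ^ l.length := by
  induction l with
  | nil => simp [nu]
  | cons a t ih =>
      rw [nu_cons]
      have h2 : a.val + 1 ≤ n := a.isLt
      calc a.val * n ^ t.length + nu t < a.val * n ^ t.length + n ^ t.length := by omega
        _ = (a.val + 1) * n ^ t.length := by ring
        _ ≤ n * n ^ t.length := Nat.mul_le_mul_right _ h2
        _ = n ^ (a :: t).length := by rw [List.length_cons]; ring

lemma nu_lt_of_head (x : List (Fin n)) {r r' : List (Fin n)} {b a : Fin n}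
    (hlen : r.length = r'.length) (hab : b < a) :
    nu (x ++ b :: r) < nu (x ++ a :: r') := by
  rw [nu_append, nu_append, nu_cons, nu_cons]
  have he : (b :: r).length = (a :: r').length := by simp [hlen]
  rw [he]
  have h1 : nu r < n ^ r.length := nu_lt r
  have h2 : b.val + 1 ≤ a.val := hab
  have h3 : b.val * n ^ r.length + nu r < a.val * n ^ r'.length + nu r' := by
    calc b.val * n ^ r.length + nu r < b.val * n ^ r.length + n ^ r.length := by omega
      _ = (b.val + 1) * n ^ r.length := by ring
      _ ≤ a.val * n ^ r.length := Nat.mul_le_mul_right _ h2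
      _ = a.val * n ^ r'.length := by rw [hlen]
      _ ≤ a.val * n ^ r'.length + nu r' := Nat.le_add_right _ _
  omega

/-! ### Bisorted lists -/

def Bisort : List (Fin n) → Prop
  | a :: c :: d :: t => a < d ∧ Bisort (c :: d :: t)
  | _ => True

lemma bisort_or (l : List (Fin n)) :
    Bisort l ∨ ∃ (x : List (Fin n)) (a c d : Fin n) (z : List (Fin n)),
      l = x ++ a :: c :: d :: z ∧ ¬ a < d := by
  induction l with
  | nil => left; trivial
  | cons a t ih =>
      rcases ih with h | ⟨x, a', c', d', z, rfl, hlt⟩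
      · rcases t with _ | ⟨c, _ | ⟨d, t2⟩⟩
        · left; trivial
        · left; trivial
        · by_cases had : a < d
          · left; exact ⟨had, h⟩
          · right; exact ⟨[], a, c, d, t2, rfl, had⟩
      · right; exact ⟨a :: x, a', c', d', z, rfl, hlt⟩

lemma bisort_tail {a : Fin n} {t : List (Fin n)} (h : Bisort (a :: t)) : Bisort t := by
  rcases t with _ | ⟨c, _ | ⟨d, t2⟩⟩
  · trivial
  · trivial
  · exact h.2

/-! ### Odd- and even-indexed sublists -/

def odds : List (Fin n) → List (Fin n)
  | [] => []
  | [a] => [a]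
  | a :: _ :: t => a :: odds t

def evens (l : List (Fin n)) : List (Fin n) := odds l.tail

@[simp] lemma evens_cons (a : Fin n) (t : List (Fin n)) : evens (a :: t) = odds t := rfl

lemma odds_cons (a : Fin n) (t : List (Fin n)) : odds (a :: t) = a :: evens t := by
  rcases t with _ | ⟨c, t1⟩ <;> rfl

def itl : List (Fin n) → List (Fin n) → List (Fin n)
  | [], _ => []
  | a :: x, y => a :: itl y x
termination_by x y => x.length + y.length
decreasing_by simp; omega

lemma itl_oe : ∀ l : List (Fin n), itl (odds l) (evens l) = l
  | [] => by simp [odds, evens, itl]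
  | a :: t => by
      rw [odds_cons, evens_cons, itl, itl_oe t]

lemma oe_inj {l l' : List (Fin n)} (h1 : odds l = odds l') (h2 : evens l = evens l') :
    l = l' := by
  rw [← itl_oe l, ← itl_oe l', h1, h2]

lemma odds_len : ∀ l : List (Fin n), (odds l).length = (l.length + 1) / 2
  | [] => by simp [odds]
  | [a] => by simp [odds]
  | a :: c :: t => by
      show (a :: odds t).length = _
      rw [List.length_cons, odds_len t]
      simp only [List.length_cons]
      omega

lemma evens_len (l : List (Fin n)) : (evens l).length = l.length / 2 := by
  rcases l with _ | ⟨a, t⟩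
  · simp [evens, odds]
  · rw [evens_cons, odds_len t]
    simp only [List.length_cons]

lemma odds_chain : ∀ l : List (Fin n), Bisort l → (odds l).Chain' (· < ·)
  | [], _ => by simp [odds, List.Chain']
  | [a], _ => by simp [odds, List.Chain']
  | a :: c :: t, h => by
      show (a :: odds t).Chain' (· < ·)
      rcases t with _ | ⟨d, t2⟩
      · simp [odds, List.Chain']
      · have h1 : a < d := h.1
        have h2 : Bisort (d :: t2) := bisort_tail h.2
        have h3 := odds_chain (d :: t2) h2
        rw [odds_cons] at h3 ⊢
        rw [List.Chain', List.isChain_cons_cons]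
        exact ⟨h1, h3⟩

lemma evens_chain (l : List (Fin n)) (h : Bisort l) : (evens l).Chain' (· < ·) := by
  rcases l with _ | ⟨a, t⟩
  · simp [evens, odds, List.Chain']
  · rw [evens_cons]
    exact odds_chain t (bisort_tail h)

lemma chain_nodup {m : List (Fin n)} (h : m.Chain' (· < ·)) : m.Nodup := by
  have hp := List.isChain_iff_pairwise.mp h
  exact hp.imp (fun h => ne_of_lt h)

lemma chain_eq_of_toFinset {m m' : List (Fin n)} (h : m.Chain' (· < ·))
    (h' : m'.Chain' (· < ·)) (he : m.toFinset = m'.toFinset) : m = m' := by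
  haveI : IsAntisymm (Fin n) (· < ·) := ⟨fun a b h1 h2 => absurd h1 (asymm h2)⟩
  exact List.Perm.eq_of_pairwise'
    (List.isChain_iff_pairwise.mp h) (List.isChain_iff_pairwise.mp h')
    (List.perm_of_nodup_nodup_toFinset_eq (chain_nodup h) (chain_nodup h') he)

/-! ### The spanning theorem -/

def BiSet : ℕ → Set (List (Fin n)) := fun _ => {l | Odd l.length ∧ Bisort l}

def Sgen (v : Fin n → B) : Set B := wgo v false '' (BiSet n)

theorem mem_span_sgen (hr : RGrel v) (l : List (Fin n)) (hodd : Odd l.length) :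
    wgo v false l ∈ Submodule.span ℂ (Sgen v) := by
  suffices H : ∀ (L m : ℕ) (l : List (Fin n)), l.length = L → nu l < m → Odd L →
      wgo v false l ∈ Submodule.span ℂ (Sgen v) by
    exact H l.length (nu l + 1) l rfl (Nat.lt_succ_self _) hodd
  intro L
  induction L using Nat.strong_induction_on with
  | _ L IH1 =>
  intro m
  induction m with
  | zero => intro l _ h; exact absurd h (Nat.not_lt_zero _)
  | succ m IH2 =>
    intro l hl hnu hodd
    rcases bisort_or l with hb | ⟨x, a, c, d, z, rfl, hlt⟩
    · exact Submodule.subset_span ⟨l, ⟨hl ▸ hodd, hb⟩, rfl⟩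
    · have hL : x.length + z.length + 3 = L := by
        simp only [List.length_append, List.length_cons] at hl
        omega
      have hoddL := Nat.odd_iff.mp hodd
      -- helper to handle the shorter words
      have short : ∀ e : Fin n, wgo v false (x ++ [e] ++ z) ∈ Submodule.span ℂ (Sgen v) := by
        intro e
        apply IH1 (x.length + z.length + 1) (by omega) (nu (x ++ [e] ++ z) + 1) _ _
          (Nat.lt_succ_self _)
        · rw [Nat.odd_iff]; omega
        · simp only [List.length_append, List.length_cons, List.length_nil]; omega
      have hre : x ++ a :: c :: d :: z = x ++ [a, c, d] ++ z := by simp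
      have hlen2 : ∀ e f g : Fin n, (x ++ [e, f, g] ++ z).length = L := by
        intro e f g
        simp only [List.length_append, List.length_cons, List.length_nil]; omega
      by_cases had : a = d
      · by_cases hca : c = a
        · rw [hre, splice_congr (m := [a, c, d]) (m' := [a]) (by simp)
            (fun cc => by rw [hca, ← had]; exact hr.L1 cc a) false x z]
          exact short a
        · rw [hre, splice_zero (m := [a, c, d])
            (fun cc => by rw [← had]; exact hr.L2 cc (Ne.symm hca)) false x z]
          exact Submodule.zero_mem _
      · have hda : d < a := lt_of_le_of_ne (le_of_not_gt hlt) (fun h => had h.symm)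
        by_cases hca : c = a
        · rw [hre, splice_sub (m := [a, c, d]) (m₁ := [d]) (m₂ := [d, a, a]) (by simp) (by simp)
            (fun cc => by rw [hca]; exact hr.L3 cc had) false x z]
          apply sub_mem (short d)
          have hnult : nu (x ++ [d, a, a] ++ z) < nu (x ++ a :: c :: d :: z) := by
            simp only [List.append_assoc, List.cons_append, List.nil_append]
            exact nu_lt_of_head x (by simp) hda
          exact IH2 _ (hlen2 d a a)
            (Nat.lt_of_lt_of_le hnult (Nat.lt_succ_iff.mp hnu)) hodd
        · by_cases hcd : c = d
          · rw [hre, splice_sub (m := [a, c, d]) (m₁ := [a]) (m₂ := [c, c, a]) (by simp) (by simp)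
              (fun cc => by rw [hcd]; exact hr.L4 cc (ne_of_lt hda)) false x z]
            apply sub_mem (short a)
            have hca2 : c < a := by rw [hcd]; exact hda
            have hnult : nu (x ++ [c, c, a] ++ z) < nu (x ++ a :: c :: d :: z) := by
              simp only [List.append_assoc, List.cons_append, List.nil_append]
              exact nu_lt_of_head x (by simp) hca2
            exact IH2 _ (hlen2 c c a)
              (Nat.lt_of_lt_of_le hnult (Nat.lt_succ_iff.mp hnu)) hodd
          · rw [hre, splice_neg (m := [a, c, d]) (m' := [d, c, a]) rfl
              (fun cc => hr.L5 cc (Ne.symm hca) hcd had) false x z]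
            apply neg_mem
            have hnult : nu (x ++ [d, c, a] ++ z) < nu (x ++ a :: c :: d :: z) := by
              simp only [List.append_assoc, List.cons_append, List.nil_append]
              exact nu_lt_of_head x (by simp) hda
            exact IH2 _ (hlen2 d c a)
              (Nat.lt_of_lt_of_le hnult (Nat.lt_succ_iff.mp hnu)) hodd

/-! ### Counting bisorted lists -/

abbrev Pty (n : ℕ) : Type := {p : Finset (Fin n) × Finset (Fin n) // p.1.card = p.2.card + 1}

lemma hcnt (n j : ℕ) :
    (Finset.univ.filter fun s : Finset (Fin n) => s.card = j).card = n.choose j := by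
  rw [← Fintype.card_subtype, Fintype.card_finset_len, Fintype.card_fin]

lemma card_Pty (n : ℕ) :
    Fintype.card (Pty n) = ∑ k ∈ Finset.Icc 1 n, n.choose (k - 1) * n.choose k := by
  rw [show Fintype.card (Pty n) =
      (Finset.univ.filter fun p : Finset (Fin n) × Finset (Fin n) =>
        p.1.card = p.2.card + 1).card from Fintype.card_subtype _]
  rw [Finset.card_eq_sum_card_fiberwise (f := fun p => p.1.card) (t := Finset.Icc 1 n)
    (by
      intro p hp
      show p.1.card ∈ Finset.Icc 1 n
      rw [Finset.mem_coe, Finset.mem_filter] at hp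
      have h2 := hp.2
      have h1 : p.1.card ≤ n := by
        simpa using Finset.card_le_univ p.1
      exact Finset.mem_Icc.mpr (by omega))]
  apply Finset.sum_congr rfl
  intro k hk
  rw [Finset.mem_Icc] at hk
  rw [Finset.filter_filter]
  have hiff : ∀ p : Finset (Fin n) × Finset (Fin n),
      (p.1.card = p.2.card + 1 ∧ p.1.card = k) ↔ (p.1.card = k ∧ p.2.card = k - 1) := by
    intro p; omega
  rw [Finset.filter_congr (fun p _ => hiff p), ← Finset.univ_product_univ,
    Finset.filter_product (fun s : Finset (Fin n) => s.card = k)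
      (fun s : Finset (Fin n) => s.card = k - 1),
    Finset.card_product, hcnt, hcnt, mul_comm]

lemma biset_card_aux {n : ℕ} (l : List (Fin n)) (hodd : Odd l.length) (hb : Bisort l) :
    (odds l).toFinset.card = (evens l).toFinset.card + 1 := by
  rw [List.toFinset_card_of_nodup (chain_nodup (odds_chain _ hb)),
    List.toFinset_card_of_nodup (chain_nodup (evens_chain _ hb)),
    odds_len, evens_len]
  have := Nat.odd_iff.mp hodd
  omega

lemma biset_inj (n : ℕ) :
    ∃ f : {l : List (Fin n) // l ∈ BiSet n} → Pty n, Function.Injective f := by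
  refine ⟨fun l => ⟨((odds l.1).toFinset, (evens l.1).toFinset),
    biset_card_aux l.1 l.2.1 l.2.2⟩, ?_⟩
  · intro x y h
    simp only [Subtype.mk.injEq, Prod.mk.injEq] at h
    apply Subtype.ext
    exact oe_inj
      (chain_eq_of_toFinset (odds_chain _ x.2.2) (odds_chain _ y.2.2) h.1)
      (chain_eq_of_toFinset (evens_chain _ x.2.2) (evens_chain _ y.2.2) h.2)

lemma biset_finite (n : ℕ) : (BiSet n : Set (List (Fin n))).Finite := by
  obtain ⟨f, hf⟩ := biset_inj n
  rw [← Set.finite_coe_iff]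
  exact Finite.of_injective f hf

lemma mk_biset_le (n : ℕ) :
    Cardinal.mk (BiSet n : Set (List (Fin n))) ≤
      ((∑ k ∈ Finset.Icc 1 n, n.choose (k - 1) * n.choose k : ℕ) : Cardinal) := by
  obtain ⟨f, hf⟩ := biset_inj n
  calc Cardinal.mk (BiSet n : Set (List (Fin n))) ≤ Cardinal.mk (Pty n) :=
        Cardinal.mk_le_of_injective hf
    _ = Fintype.card (Pty n) := Cardinal.mk_fintype _
    _ = _ := by rw [card_Pty]

/-! ### From `jtp` relations to the TRO relations -/

lemma half_helper {A : Type*} [AddCommGroup A] [Module ℂ A] {X W : A}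
    (h : (2⁻¹ : ℂ) • (X + X) = W) : X = W := by
  rw [← two_smul ℂ X, smul_smul] at h
  norm_num at h
  exact h

lemma half_helper2 {A : Type*} [AddCommGroup A] [Module ℂ A] {X W : A}
    (h : (2⁻¹ : ℂ) • X = (2⁻¹ : ℂ) • W) : X = W := by
  have h2 := congrArg (fun t => (2 : ℂ) • t) h
  simp only [smul_smul] at h2
  norm_num at h2
  exact h2

lemma rgrel_of_jtp (hjv : ∀ i j k, jtp (v i) (v j) (v k) = rgVal v i j k) :
    RGrel v := by
  constructor
  · intro i
    have h := hjv i i i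
    simp only [rgVal, if_pos rfl] at h
    unfold jtp at h
    exact half_helper h
  · intro i j hij
    have h := hjv i j i
    simp only [rgVal, if_neg hij, if_neg (Ne.symm hij)] at h
    unfold jtp at h
    exact half_helper h
  · intro i k hik
    have h := hjv i i k
    simp only [rgVal, if_pos rfl, if_neg hik] at h
    unfold jtp at h
    exact half_helper2 h
  · intro i j k hij hjk hik
    have h := hjv i j k
    simp only [rgVal, if_neg hij, if_neg hjk] at h
    unfold jtp at h
    apply half_helper2
    rw [h, smul_zero]

/-! ### The span of the bisorted words is TRO-closed -/

lemma lpar_of_odd {l : List (Fin n)} (h : Odd l.length) : lpar l = true := by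
  have h1 := Nat.odd_iff.mp h
  have h2 := Nat.mod_two_of_bodd l.length
  unfold lpar
  cases hb : Nat.bodd l.length
  · rw [hb] at h2; simp at h2; omega
  · rfl

lemma wgo_single (v : Fin n → B) (i : Fin n) : wgo v false [i] = v i := by
  show v i * 1 = v i
  rw [mul_one]

lemma tro_word (v : Fin n → B) {l1 l2 l3 : List (Fin n)}
    (h1 : Odd l1.length) (h2 : Odd l2.length) :
    wgo v false l1 * star (wgo v false l2) * wgo v false l3 =
      wgo v false (l1 ++ (l2.reverse ++ l3)) := by
  rw [star_wgo, wgo_append v false l1, wgo_append v _ l2.reverse l3,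
    lpar_reverse, lpar_of_odd h1, lpar_of_odd h2]
  show _ = _ * (wgo v (true ^^ false) l2.reverse * wgo v (true ^^ (true ^^ false)) l3)
  rw [mul_assoc]
  rfl

variable [StarModule ℂ B]

lemma span_sgen_tro (hr : RGrel v) :
    ∀ x ∈ Submodule.span ℂ (Sgen v), ∀ y ∈ Submodule.span ℂ (Sgen v),
      ∀ z ∈ Submodule.span ℂ (Sgen v), x * star y * z ∈ Submodule.span ℂ (Sgen v) := by
  have base : ∀ g1 ∈ Sgen v, ∀ g2 ∈ Sgen v, ∀ g3 ∈ Sgen v,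
      g1 * star g2 * g3 ∈ Submodule.span ℂ (Sgen v) := by
    rintro _ ⟨l1, hl1, rfl⟩ _ ⟨l2, hl2, rfl⟩ _ ⟨l3, hl3, rfl⟩
    rw [tro_word v hl1.1 hl2.1]
    apply mem_span_sgen hr
    have o1 := Nat.odd_iff.mp hl1.1
    have o2 := Nat.odd_iff.mp hl2.1
    have o3 := Nat.odd_iff.mp hl3.1
    rw [Nat.odd_iff]
    simp only [List.length_append, List.length_reverse]
    omega
  -- step A: generalize first argument
  have stepA : ∀ g2 ∈ Sgen v, ∀ g3 ∈ Sgen v, ∀ x ∈ Submodule.span ℂ (Sgen v),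
      x * star g2 * g3 ∈ Submodule.span ℂ (Sgen v) := by
    intro g2 hg2 g3 hg3 x hx
    refine Submodule.span_induction
      (p := fun t _ => t * star g2 * g3 ∈ Submodule.span ℂ (Sgen v)) ?_ ?_ ?_ ?_ hx
    · intro g1 hg1; exact base g1 hg1 g2 hg2 g3 hg3
    · simp only [zero_mul]; exact Submodule.zero_mem _
    · intro s t _ _ hs ht
      simp only [add_mul]
      exact Submodule.add_mem _ hs ht
    · intro a s _ hs
      simp only [smul_mul_assoc]
      exact Submodule.smul_mem _ a hs
  -- step B: generalize second argument
  have stepB : ∀ g3 ∈ Sgen v, ∀ y ∈ Submodule.span ℂ (Sgen v),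
      ∀ x ∈ Submodule.span ℂ (Sgen v),
      x * star y * g3 ∈ Submodule.span ℂ (Sgen v) := by
    intro g3 hg3 y hy
    refine Submodule.span_induction
      (p := fun t _ => ∀ x ∈ Submodule.span ℂ (Sgen v),
        x * star t * g3 ∈ Submodule.span ℂ (Sgen v)) ?_ ?_ ?_ ?_ hy
    · intro g2 hg2 x hx; exact stepA g2 hg2 g3 hg3 x hx
    · intro x _; simp only [star_zero, mul_zero, zero_mul]; exact Submodule.zero_mem _
    · intro s t _ _ hs ht x hx
      simp only [star_add, mul_add, add_mul]
      exact Submodule.add_mem _ (hs x hx) (ht x hx)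
    · intro a s _ hs x hx
      simp only [star_smul, mul_smul_comm, smul_mul_assoc]
      exact Submodule.smul_mem _ _ (hs x hx)
  -- step C: generalize third argument
  intro x hx y hy z hz
  refine Submodule.span_induction
    (p := fun t _ => x * star y * t ∈ Submodule.span ℂ (Sgen v)) ?_ ?_ ?_ ?_ hz
  · intro g3 hg3; exact stepB g3 hg3 y hy x hx
  · simp only [mul_zero]; exact Submodule.zero_mem _
  · intro s t _ _ hs ht
    simp only [mul_add]
    exact Submodule.add_mem _ hs ht
  · intro a s _ hs
    simp only [mul_smul_comm]
    exact Submodule.smul_mem _ a hs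

end Stmt17

/-- the universal enveloping TRO of a JC*-triple spanned by a rank-1
rectangular grid with `n` elements has dimension at most
`∑_{k=1}^{n} C(n,k-1) · C(n,k)`. -/
theorem stmt_17 (H₀ Hh : HilbertC) (n : ℕ) (Z : Submodule ℂ (BH H₀))
    (u : Fin n → BH H₀) (hgrid : IsRank1Grid Z u)
    (T : Submodule ℂ (BH Hh)) (ρ : ↥Z →L[ℂ] ↥T) (hUniv : IsUnivTRO Z T ρ) :
    Module.rank ℂ ↥T ≤
      ((∑ k ∈ Finset.Icc 1 n, n.choose (k - 1) * n.choose k : ℕ) : Cardinal) := by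
  classical
  obtain ⟨hind, hspanZ, hjtpu⟩ := hgrid
  obtain ⟨hT, hrho, hgen, -⟩ := hUniv
  have hu : ∀ i, u i ∈ Z := fun i => by
    rw [hspanZ]; exact Submodule.subset_span ⟨i, rfl⟩
  let uz : Fin n → ↥Z := fun i => ⟨u i, hu i⟩
  let v : Fin n → BH Hh := fun i => (ρ (uz i) : BH Hh)
  have hrg : ∀ i j k, rgVal u i j k ∈ Z := by
    intro i j k
    unfold rgVal
    split_ifs
    · exact hu k
    · exact Z.smul_mem _ (hu k)
    · exact Z.smul_mem _ (hu i)
    · exact Z.zero_mem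
  have hjv : ∀ i j k, jtp (v i) (v j) (v k) = rgVal v i j k := by
    intro i j k
    have hmem := hrg i j k
    have hw : ((⟨rgVal u i j k, hmem⟩ : ↥Z) : BH H₀) = jtp (u i) (u j) (u k) :=
      (hjtpu i j k).symm
    have h0 := hrho (uz i) (uz j) (uz k) ⟨rgVal u i j k, hmem⟩ hw
    rw [← h0]
    by_cases h1 : i = j
    · by_cases h2 : j = k
      · have e : (⟨rgVal u i j k, hmem⟩ : ↥Z) = uz k :=
          Subtype.ext (by simp only [rgVal, if_pos h1, if_pos h2]; all_goals rfl)
        rw [e]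
        simp only [rgVal, if_pos h1, if_pos h2]
        all_goals rfl
      · have e : (⟨rgVal u i j k, hmem⟩ : ↥Z) = (2⁻¹ : ℂ) • uz k :=
          Subtype.ext (by simp only [rgVal, if_pos h1, if_neg h2]; all_goals rfl)
        rw [e, _root_.map_smul]
        simp only [rgVal, if_pos h1, if_neg h2, SetLike.val_smul]
        all_goals rfl
    · by_cases h2 : j = k
      · have e : (⟨rgVal u i j k, hmem⟩ : ↥Z) = (2⁻¹ : ℂ) • uz i :=
          Subtype.ext (by simp only [rgVal, if_neg h1, if_pos h2]; all_goals rfl)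
        rw [e, _root_.map_smul]
        simp only [rgVal, if_neg h1, if_pos h2, SetLike.val_smul]
        all_goals rfl
      · have e : (⟨rgVal u i j k, hmem⟩ : ↥Z) = 0 :=
          Subtype.ext (by simp only [rgVal, if_neg h1, if_neg h2]; all_goals rfl)
        rw [e, map_zero]
        simp only [rgVal, if_neg h1, if_neg h2, ZeroMemClass.coe_zero]
        all_goals rfl
  have hr : Stmt17.RGrel v := Stmt17.rgrel_of_jtp hjv
  have hfin : (Stmt17.Sgen v).Finite := Set.Finite.image _ (Stmt17.biset_finite n)
  haveI : FiniteDimensional ℂ ↥(Submodule.span ℂ (Stmt17.Sgen v)) :=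
    FiniteDimensional.span_of_finite ℂ hfin
  have hWmem : Submodule.span ℂ (Stmt17.Sgen v) ∈
      {W : Submodule ℂ (BH Hh) | IsClosed (W : Set (BH Hh)) ∧
        (Set.range fun z : ↥Z => (ρ z : BH Hh)) ⊆ W ∧
        ∀ x ∈ W, ∀ y ∈ W, ∀ z ∈ W, x * star y * z ∈ W} := by
    refine ⟨Submodule.closed_of_finiteDimensional _, ?_, Stmt17.span_sgen_tro hr⟩
    rintro - ⟨z, rfl⟩
    have htop : Submodule.span ℂ (Set.range uz) = (⊤ : Submodule ℂ ↥Z) := by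
      apply Submodule.map_injective_of_injective (Submodule.injective_subtype Z)
      rw [Submodule.map_span, Submodule.map_subtype_top]
      have himg : Z.subtype '' Set.range uz = Set.range u := by
        rw [← Set.range_comp]; rfl
      rw [himg, ← hspanZ]
    have hz : z ∈ Submodule.span ℂ (Set.range uz) := htop ▸ Submodule.mem_top
    refine Submodule.span_induction
      (p := fun t _ => ((ρ t : ↥T) : BH Hh) ∈ Submodule.span ℂ (Stmt17.Sgen v))
      ?_ ?_ ?_ ?_ hz
    · rintro - ⟨i, rfl⟩
      exact Submodule.subset_span
        ⟨[i], ⟨⟨0, rfl⟩, trivial⟩, Stmt17.wgo_single v i⟩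
    · simp only [map_zero, ZeroMemClass.coe_zero]
      exact Submodule.zero_mem _
    · intro s t _ _ hs ht
      simp only [map_add, Submodule.coe_add]
      exact Submodule.add_mem _ hs ht
    · intro a s _ hs
      simp only [_root_.map_smul, SetLike.val_smul]
      exact Submodule.smul_mem _ a hs
  have hTle : T ≤ Submodule.span ℂ (Stmt17.Sgen v) := by
    rw [← hgen]
    exact sInf_le hWmem
  calc Module.rank ℂ ↥T ≤ Module.rank ℂ ↥(Submodule.span ℂ (Stmt17.Sgen v)) :=
        Submodule.rank_mono hTle
    _ ≤ Cardinal.mk (Stmt17.Sgen v) := rank_span_le _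
    _ ≤ Cardinal.mk (Stmt17.BiSet n : Set (List (Fin n))) := Cardinal.mk_image_le
    _ ≤ _ := Stmt17.mk_biset_le n
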